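/- Let 𝒰 be a Unique Games instance over alphabet [Q] on a finite multigraph G=(V,E) with m>0. Let R_0=V, and for i=1,…,N let S_i⊆R_{i−1} be nonempty and η_i-UG-peelable in R_{i−1}, with R_i=R_{i−1}∖S_i, and write R_*=R_N for the final residual. Then τ_UG(𝒰) ≤ 2·Σ_{i=1}^N η_i·π(S_i) + π(R_*). -/

import Mathlib

open scoped Classical

noncomputable section

/-- Degree of a vertex in a finite multigraph given by endpoint maps (with multiplicity). -/
def mdeg {V E : Type} [Fintype E] [DecidableEq V] (fste snde : E → V) (v : V) : ℕ :=
  (Finset.univ.filter (fun e => fste e = v)).card +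
    (Finset.univ.filter (fun e => snde e = v)).card

/-- Volume of a vertex set: `vol(S) = Σ_{v∈S} deg(v)`. -/
def mvol {V E : Type} [Fintype E] [DecidableEq V] (fste snde : E → V) (S : Finset V) : ℕ :=
  ∑ v ∈ S, mdeg fste snde v

/-- Number of edge copies internal to `S` violated by `ℓ` (constraints stored oriented
from `fste` to `snde`). -/
def badIn {V E : Type} [Fintype E] [DecidableEq V] {Q : ℕ}
    (fste snde : E → V) (perm : E → Equiv.Perm (Fin Q)) (S : Finset V) (ℓ : V → Fin Q) : ℕ :=
  (Finset.univ.filter (fun e =>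
    fste e ∈ S ∧ snde e ∈ S ∧ ℓ (snde e) ≠ perm e (ℓ (fste e)))).card

/-- Number of edge copies with one endpoint in `S` and the other in `R \ S`. -/
def bdry {V E : Type} [Fintype E] [DecidableEq V] (fste snde : E → V) (S R : Finset V) : ℕ :=
  (Finset.univ.filter (fun e =>
    (fste e ∈ S ∧ snde e ∈ R \ S) ∨ (snde e ∈ S ∧ fste e ∈ R \ S))).card

/-- `τ_UG(𝒰)`: the minimum, over labelings `x : V → [Q]`, of the fraction of violated
edge copies. -/
def tauUG {V E : Type} [Fintype V] [Fintype E] [DecidableEq V] {Q : ℕ}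
    (fste snde : E → V) (perm : E → Equiv.Perm (Fin Q)) : ℝ :=
  ⨅ x : V → Fin Q,
    ((Finset.univ.filter (fun e => x (snde e) ≠ perm e (x (fste e)))).card : ℝ) /
      (Fintype.card E : ℝ)

lemma card_filter_mem {V E : Type} [Fintype E] [DecidableEq V]
    (f : E → V) (S : Finset V) :
    (Finset.univ.filter (fun e => f e ∈ S)).card =
      ∑ v ∈ S, (Finset.univ.filter (fun e => f e = v)).card := by
  rw [Finset.card_eq_sum_card_fiberwise (f := f) (s := Finset.univ.filter (fun e => f e ∈ S)) (t := S)
    (fun e he => by simpa using he)]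
  refine Finset.sum_congr rfl fun v hv => ?_
  congr 1
  ext e
  simp only [Finset.mem_filter, Finset.mem_univ, true_and]
  exact ⟨fun h => h.2, fun h => ⟨by rw [h]; exact hv, h⟩⟩

lemma mvol_eq_split {V E : Type} [Fintype V] [Fintype E] [DecidableEq V]
    (fste snde : E → V) (S : Finset V) :
    mvol fste snde S =
      (Finset.univ.filter (fun e => fste e ∈ S)).card +
      (Finset.univ.filter (fun e => snde e ∈ S)).card := by
  unfold mvol mdeg
  rw [Finset.sum_add_distrib, card_filter_mem fste S, card_filter_mem snde S]

lemma tauUG_le_frac {V E : Type} [Fintype V] [Fintype E] [DecidableEq V] {Q : ℕ}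
    (fste snde : E → V) (perm : E → Equiv.Perm (Fin Q)) (x : V → Fin Q) :
    tauUG fste snde perm ≤
      ((Finset.univ.filter (fun e => x (snde e) ≠ perm e (x (fste e)))).card : ℝ) /
        (Fintype.card E : ℝ) := by
  refine ciInf_le ⟨0, ?_⟩ x
  rintro y ⟨z, rfl⟩
  positivity

/-- Nonuniform UG peeling: if disjoint sets `S i` are successively `η i`-UG-peelable in the
residuals `Rres i` (with `Rres 0 = V`, `Rres (i+1) = Rres i \ S i`), then
`τ_UG(𝒰) ≤ 2 Σ_i η_i π(S_i) + π(R_*)`, where `π(S) = vol(S)/(2m)`. -/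
theorem stmt8 (Q : ℕ) (V E : Type) [Fintype V] [Fintype E] [DecidableEq V]
    (fste snde : E → V) (hne : ∀ e, fste e ≠ snde e) (hm : 0 < Fintype.card E)
    (perm : E → Equiv.Perm (Fin Q))
    (N : ℕ) (S : ℕ → Finset V) (η : ℕ → ℝ) (Rres : ℕ → Finset V)
    (hR0 : Rres 0 = Finset.univ)
    (hRstep : ∀ i < N, Rres (i + 1) = Rres i \ S i)
    (hSsub : ∀ i < N, S i ⊆ Rres i)
    (hSne : ∀ i < N, (S i).Nonempty)
    (hpeel : ∀ i < N, ∃ ℓ : V → Fin Q,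
      ((badIn fste snde perm (S i) ℓ : ℝ) + (bdry fste snde (S i) (Rres i) : ℝ))
        ≤ η i * (mvol fste snde (S i) : ℝ)) :
    tauUG fste snde perm ≤
      2 * (∑ i ∈ Finset.range N,
            η i * ((mvol fste snde (S i) : ℝ) / (2 * (Fintype.card E : ℝ))))
        + (mvol fste snde (Rres N) : ℝ) / (2 * (Fintype.card E : ℝ)) := by
  classical
  have hmR : (0:ℝ) < (Fintype.card E : ℝ) := by exact_mod_cast hm
  by_cases hQ : Nonempty (V → Fin Q)
  · -- main case
    choose ℓ hℓ using hpeel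
    set L : ℕ → V → Fin Q := fun i => if h : i < N then ℓ i h else hQ.some with hLdef
    have hLeq : ∀ i (h : i < N), L i = ℓ i h := fun i h => dif_pos h
    -- monotonicity of residuals
    have hmono : ∀ i j, i ≤ j → j ≤ N → Rres j ⊆ Rres i := by
      intro i j hij hjN
      induction j with
      | zero =>
        rw [Nat.le_zero.mp hij]
      | succ k ih =>
        rcases Nat.lt_or_ge i (k+1) with h | h
        · have hkN : k < N := Nat.lt_of_lt_of_le (Nat.lt_succ_self k) hjN
          have hstep : Rres (k+1) ⊆ Rres k := by
            rw [hRstep k hkN]; exact Finset.sdiff_subset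
          exact hstep.trans (ih (Nat.lt_succ_iff.mp h) (Nat.le_of_lt hkN))
        · rw [Nat.le_antisymm hij h]
    -- disjointness of peeled sets
    have hdisj : ∀ i j, i < j → j < N → ∀ v, v ∈ S i → v ∉ S j := by
      intro i j hij hjN v hvi hvj
      have hiN : i < N := lt_trans hij hjN
      have h1 : v ∉ Rres (i+1) := by
        rw [hRstep i hiN]
        simp [hvi]
      exact h1 (hmono (i+1) j hij (Nat.le_of_lt hjN) (hSsub j hjN hvj))
    -- cover
    have hcover : ∀ v : V, v ∉ Rres N → ∃ i, i < N ∧ v ∈ S i := by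
      intro v hv
      by_contra h
      push_neg at h
      apply hv
      have : ∀ j, j ≤ N → v ∈ Rres j := by
        intro j hj
        induction j with
        | zero => rw [hR0]; exact Finset.mem_univ v
        | succ k ih =>
          have hkN : k < N := hj
          rw [hRstep k hkN, Finset.mem_sdiff]
          exact ⟨ih (Nat.le_of_lt hkN), h k hkN⟩
      exact this N le_rfl
    -- the labeling
    set x : V → Fin Q := fun v =>
      if h : ∃ i, i < N ∧ v ∈ S i then L (Nat.find h) v else hQ.some v with hxdef
    have hx : ∀ k, k < N → ∀ v ∈ S k, x v = L k v := by
      intro k hk v hv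
      have hex : ∃ i, i < N ∧ v ∈ S i := ⟨k, hk, hv⟩
      have hfind : Nat.find hex = k := by
        obtain ⟨h1, h2⟩ := Nat.find_spec hex
        rcases lt_trichotomy (Nat.find hex) k with h | h | h
        · exact absurd hv (hdisj _ k h hk v h2)
        · exact h
        · exact (Nat.find_min hex h ⟨hk, hv⟩).elim
      simp only [hxdef, dif_pos hex, hfind]
    -- bad edge set
    set Bad := Finset.univ.filter (fun e => x (snde e) ≠ perm e (x (fste e))) with hBaddef
    set IntR := Finset.univ.filter
      (fun e => fste e ∈ Rres N ∧ snde e ∈ Rres N) with hIntRdef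
    set BS : ℕ → Finset E := fun k =>
      Finset.univ.filter (fun e =>
        fste e ∈ S k ∧ snde e ∈ S k ∧ (L k) (snde e) ≠ perm e ((L k) (fste e))) with hBSdef
    set DS : ℕ → Finset E := fun k =>
      Finset.univ.filter (fun e =>
        (fste e ∈ S k ∧ snde e ∈ Rres k \ S k) ∨
        (snde e ∈ S k ∧ fste e ∈ Rres k \ S k)) with hDSdef
    have hsub : Bad ⊆ ((Finset.range N).biUnion (fun k => BS k ∪ DS k)) ∪ IntR := by
      intro e he
      have hviol : x (snde e) ≠ perm e (x (fste e)) := by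
        simpa [hBaddef, Finset.mem_filter] using he
      by_cases hre : fste e ∈ Rres N ∧ snde e ∈ Rres N
      · exact Finset.mem_union_right _ (by simp [hIntRdef, hre.1, hre.2])
      · have hex : ∃ i, i < N ∧ (fste e ∈ S i ∨ snde e ∈ S i) := by
          rcases not_and_or.mp hre with h | h
          · obtain ⟨i, hi, his⟩ := hcover _ h
            exact ⟨i, hi, Or.inl his⟩
          · obtain ⟨i, hi, his⟩ := hcover _ h
            exact ⟨i, hi, Or.inr his⟩
        set k := Nat.find hex with hkdef
        obtain ⟨hkN, hkS⟩ := Nat.find_spec hex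
        have hinR : ∀ j, j ≤ k → fste e ∈ Rres j ∧ snde e ∈ Rres j := by
          intro j hj
          induction j with
          | zero => rw [hR0]; exact ⟨Finset.mem_univ _, Finset.mem_univ _⟩
          | succ t ih =>
            have htk : t < k := hj
            obtain ⟨hu, hv⟩ := ih (Nat.le_of_lt htk)
            have htN : t < N := lt_trans htk hkN
            have hnot := Nat.find_min hex htk
            push_neg at hnot
            have hns := hnot htN
            rw [hRstep t htN, Finset.mem_sdiff, Finset.mem_sdiff]
            exact ⟨⟨hu, hns.1⟩, ⟨hv, hns.2⟩⟩
        obtain ⟨huR, hvR⟩ := hinR k le_rfl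
        apply Finset.mem_union_left
        refine Finset.mem_biUnion.mpr ⟨k, Finset.mem_range.mpr hkN, ?_⟩
        rcases hkS with hu | hv
        · by_cases hv : snde e ∈ S k
          · apply Finset.mem_union_left
            have h1 := hx k hkN _ hu
            have h2 := hx k hkN _ hv
            simp only [hBSdef, Finset.mem_filter, Finset.mem_univ, true_and]
            exact ⟨hu, hv, by rw [← h1, ← h2]; exact hviol⟩
          · apply Finset.mem_union_right
            simp only [hDSdef, Finset.mem_filter, Finset.mem_univ, true_and]
            exact Or.inl ⟨hu, Finset.mem_sdiff.mpr ⟨hvR, hv⟩⟩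
        · by_cases hu : fste e ∈ S k
          · apply Finset.mem_union_left
            have h1 := hx k hkN _ hu
            have h2 := hx k hkN _ hv
            simp only [hBSdef, Finset.mem_filter, Finset.mem_univ, true_and]
            exact ⟨hu, hv, by rw [← h1, ← h2]; exact hviol⟩
          · apply Finset.mem_union_right
            simp only [hDSdef, Finset.mem_filter, Finset.mem_univ, true_and]
            exact Or.inr ⟨hv, Finset.mem_sdiff.mpr ⟨huR, hu⟩⟩
    -- cardinality chain (in ℕ)
    have hcard : Bad.card ≤
        (∑ k ∈ Finset.range N, (badIn fste snde perm (S k) (L k) +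
          bdry fste snde (S k) (Rres k))) + IntR.card := by
      calc Bad.card ≤ (((Finset.range N).biUnion (fun k => BS k ∪ DS k)) ∪ IntR).card :=
            Finset.card_le_card hsub
        _ ≤ ((Finset.range N).biUnion (fun k => BS k ∪ DS k)).card + IntR.card :=
            Finset.card_union_le _ _
        _ ≤ (∑ k ∈ Finset.range N, (BS k ∪ DS k).card) + IntR.card := by
            exact Nat.add_le_add_right (Finset.card_biUnion_le) _
        _ ≤ (∑ k ∈ Finset.range N, (badIn fste snde perm (S k) (L k) +
              bdry fste snde (S k) (Rres k))) + IntR.card := by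
            refine Nat.add_le_add_right (Finset.sum_le_sum fun k _ => ?_) _
            exact Finset.card_union_le _ _
    -- boundary of residual
    have hInt : 2 * IntR.card ≤ mvol fste snde (Rres N) := by
      rw [mvol_eq_split, two_mul]
      refine Nat.add_le_add ?_ ?_
      · apply Finset.card_le_card
        intro e he
        simp only [hIntRdef, Finset.mem_filter, Finset.mem_univ, true_and] at he ⊢
        exact he.1
      · apply Finset.card_le_card
        intro e he
        simp only [hIntRdef, Finset.mem_filter, Finset.mem_univ, true_and] at he ⊢
        exact he.2
    -- final real inequality
    have key : (Bad.card : ℝ) ≤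
        (∑ k ∈ Finset.range N, η k * (mvol fste snde (S k) : ℝ)) +
          (mvol fste snde (Rres N) : ℝ) / 2 := by
      have h1 : (Bad.card : ℝ) ≤
          (∑ k ∈ Finset.range N, ((badIn fste snde perm (S k) (L k) : ℝ) +
            (bdry fste snde (S k) (Rres k) : ℝ))) + (IntR.card : ℝ) := by
        exact_mod_cast hcard
      refine h1.trans (add_le_add ?_ ?_)
      · refine Finset.sum_le_sum fun k hk => ?_
        have hkN := Finset.mem_range.mp hk
        rw [hLeq k hkN]
        exact hℓ k hkN
      · have : (2 : ℝ) * IntR.card ≤ (mvol fste snde (Rres N) : ℝ) := by exact_mod_cast hInt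
        linarith
    have hrw : 2 * (∑ i ∈ Finset.range N,
            η i * ((mvol fste snde (S i) : ℝ) / (2 * (Fintype.card E : ℝ))))
        + (mvol fste snde (Rres N) : ℝ) / (2 * (Fintype.card E : ℝ)) =
        ((∑ k ∈ Finset.range N, η k * (mvol fste snde (S k) : ℝ)) +
          (mvol fste snde (Rres N) : ℝ) / 2) / (Fintype.card E : ℝ) := by
      rw [add_div, Finset.mul_sum, Finset.sum_div]
      congr 1
      · refine Finset.sum_congr rfl fun k _ => ?_
        field_simp
      · rw [div_div]
    rw [hrw]
    refine (tauUG_le_frac fste snde perm x).trans ?_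
    exact (div_le_div_iff_of_pos_right hmR).mpr key
  · -- empty labeling type: then N = 0 and tauUG = 0
    have hN : N = 0 := by
      by_contra h
      obtain ⟨l, -⟩ := hpeel 0 (Nat.pos_of_ne_zero h)
      exact hQ ⟨l⟩
    subst hN
    simp only [Finset.range_zero, Finset.sum_empty, mul_zero, zero_add]
    have h1 : tauUG fste snde perm = 0 := by
      have : IsEmpty (V → Fin Q) := not_nonempty_iff.mp hQ
      exact Real.iInf_of_isEmpty _
    rw [h1]
    positivity
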